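/- arXiv:1904.04786 — 3 statements merged into one kernel-verified Lean document; each statement's English description precedes it below -/
import Mathlib

section
/- Let (T, D) be any random labeled plane tree and let (T^sym, D^sym) be its symmetrization. Then for any constants k, K, M: P( sup over 0 ≤ i, j ≤ 2|T|−2 with |i−j| ≤ k of |ℓ(θ_T(i)) − ℓ(θ_T(j))| > M ) ≤ P( sup over |i−j| ≤ k of dist_T(θ_T(i), θ_T(j)) > K ) + P( sup over vertices v, w of T^sym with dist(v,w) ≤ K of |ℓ^sym(v) − ℓ^sym(w)| > M ), where ℓ, ℓ^sym are the vertex labels of (T, D) and (T^sym, D^sym). -/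
open MeasureTheory Filter Topology
open scoped ENNReal NNReal Classical

noncomputable section

namespace TreeSym

/-- Ulam–Harris words over the positive integers. -/
abbrev Vertex : Type := List ℕ+

instance : MeasurableSpace Vertex := ⊤
instance : MeasurableSpace (Finset Vertex) := ⊤

/-- A finite set of Ulam–Harris words is (the vertex set of) a rooted plane tree if it contains
the empty word, is prefix-closed, and is closed under decreasing the last letter. -/
def IsPlaneTreeSet (t : Finset Vertex) : Prop :=
  ([] : Vertex) ∈ t ∧
  (∀ v ∈ t, ∀ u : Vertex, u <+: v → u ∈ t) ∧
  (∀ v : Vertex, ∀ i j : ℕ+, v ++ [i] ∈ t → j ≤ i → v ++ [j] ∈ t)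

/-- The number of children of `v` in the vertex set `t`. -/
def nChild (t : Finset Vertex) (v : Vertex) : ℕ :=
  (t.filter fun w => ∃ i : ℕ+, w = v ++ [i]).card

/-- Length of the longest common prefix of two words. -/
def lcpLen : Vertex → Vertex → ℕ
  | a :: u, b :: v => if a = b then lcpLen u v + 1 else 0
  | _, _ => 0

/-- The graph distance between two vertices of a plane tree. -/
def treeDist (u v : Vertex) : ℕ := u.length + v.length - 2 * lcpLen u v

/-- History of the contour exploration of the plane tree with vertex set `t`
(most recently visited vertex first). -/
def contourHist (t : Finset Vertex) : ℕ → List Vertex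
  | 0 => [([] : Vertex)]
  | n + 1 =>
    let h := contourHist t n
    let cur := h.headI
    if (∃ m : ℕ, cur ++ [m.succPNat] ∈ t ∧ cur ++ [m.succPNat] ∉ h) then
      (cur ++ [(sInf {m : ℕ | cur ++ [m.succPNat] ∈ t ∧ cur ++ [m.succPNat] ∉ h}).succPNat]) :: h
    else
      cur.dropLast :: h

/-- The contour exploration `θ_t`. -/
def theta (t : Finset Vertex) (i : ℕ) : Vertex := (contourHist t i).headI

/-- Piecewise linear interpolation: `interpFun n f (i/n) = f i` for `0 ≤ i ≤ n`, linear in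
between. -/
def interpFun (n : ℕ) (f : ℕ → ℝ) (s : ℝ) : ℝ :=
  f 0 + ∑ k ∈ Finset.range n, (f (k + 1) - f k) * max 0 (min 1 (s * n - k))

lemma continuous_interpFun (n : ℕ) (f : ℕ → ℝ) : Continuous (interpFun n f) := by
  unfold interpFun
  refine continuous_const.add (continuous_finset_sum _ fun k _ => continuous_const.mul ?_)
  exact continuous_const.max (continuous_const.min
    ((continuous_id.mul continuous_const).sub continuous_const))

/-- Piecewise linear interpolation, as a continuous map on `[0,1]`. -/
def interpMap (n : ℕ) (f : ℕ → ℝ) : C(unitInterval, ℝ) :=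
  ⟨fun s => interpFun n f s, (continuous_interpFun n f).comp continuous_subtype_val⟩

/-- A multitype labeled plane tree with type space `S`: a finite set of Ulam–Harris words,
together with a type and a displacement (the label increment along the edge to the parent)
attached to each word. -/
structure MTree (S : Type*) where
  verts : Finset Vertex
  type : Vertex → S
  disp : Vertex → ℝ

/-- The underlying vertex set is a plane tree. -/
def MTree.IsPlaneTree {S : Type*} (T : MTree S) : Prop := IsPlaneTreeSet T.verts

instance {S : Type*} [MeasurableSpace S] : MeasurableSpace (MTree S) :=
  MeasurableSpace.comap (fun T => (T.verts, T.type, T.disp)) inferInstance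

/-- The label of a vertex: the sum of the displacements along the path from the root. -/
def labelOf {S : Type*} (T : MTree S) (v : Vertex) : ℝ :=
  ∑ j ∈ Finset.range v.length, T.disp (v.take (j + 1))

/-- The contour process, as a function on `ℝ`. -/
def contourFun {S : Type*} (T : MTree S) (s : ℝ) : ℝ :=
  interpFun (2 * T.verts.card - 2) (fun i => ((theta T.verts i).length : ℝ)) s

/-- The label process, as a function on `ℝ`. -/
def labelFun {S : Type*} (T : MTree S) (s : ℝ) : ℝ :=
  interpFun (2 * T.verts.card - 2) (fun i => labelOf T (theta T.verts i)) s

/-- The contour process `C` of a tree, as a continuous map on `[0,1]`. -/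
def contourProcess {S : Type*} (T : MTree S) : C(unitInterval, ℝ) :=
  interpMap (2 * T.verts.card - 2) fun i => ((theta T.verts i).length : ℝ)

/-- The label process `Z` of a labeled tree, as a continuous map on `[0,1]`. -/
def labelProcess {S : Type*} (T : MTree S) : C(unitInterval, ℝ) :=
  interpMap (2 * T.verts.card - 2) fun i => labelOf T (theta T.verts i)

/-- The process `Λ^{(q)}` counting visited vertices of type `q` along the contour. -/
def lambdaProcess {S : Type*} (q : S) (T : MTree S) : C(unitInterval, ℝ) :=
  interpMap (2 * T.verts.card - 2) fun i =>
    (((Finset.range i).filter fun j => T.type (theta T.verts j) = q).card : ℝ)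

/-! ### Symmetrization -/

/-- A vector of permutations, one for each potential vertex. -/
abbrev PermVec : Type := Vertex → Equiv.Perm ℕ+

/-- Relabel a word according to a permutation vector, the permutation used at each level being
the one attached to the (original) prefix. -/
def permWordAux (σ : PermVec) : Vertex → Vertex → Vertex
  | _, [] => []
  | p, i :: rest => σ p i :: permWordAux σ (p ++ [i]) rest

def permWord (σ : PermVec) (v : Vertex) : Vertex := permWordAux σ [] v

/-- The inverse relabeling. -/
def invWordAux (σ : PermVec) : Vertex → Vertex → Vertex
  | _, [] => []
  | p, j :: rest => (σ p)⁻¹ j :: invWordAux σ (p ++ [(σ p)⁻¹ j]) rest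

def invWord (σ : PermVec) (w : Vertex) : Vertex := invWordAux σ [] w

/-- Apply a permutation vector to a labeled multitype tree: children are reordered at every
vertex, types and displacements following their vertices and edges. -/
def permApply {S : Type*} (σ : PermVec) (T : MTree S) : MTree S :=
  ⟨T.verts.image (permWord σ), fun w => T.type (invWord σ w), fun w => T.disp (invWord σ w)⟩

/-- The set `P_t` of admissible permutation vectors for `T`: at a vertex with `k` children the
permutation fixes everything above `k` and permutes `{1,…,k}`; away from the tree it is the
identity. -/
def PermSet {S : Type*} (T : MTree S) : Set PermVec :=
  {σ | (∀ v ∈ T.verts,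
          (∀ i : ℕ+, (i : ℕ) ≤ nChild T.verts v → ((σ v i : ℕ) ≤ nChild T.verts v)) ∧
          (∀ i : ℕ+, nChild T.verts v < (i : ℕ) → σ v i = i)) ∧
        ∀ v ∉ T.verts, σ v = 1}

/-- The law of the symmetrization of the (deterministic) tree `T`: the uniform average of the
point masses at `σ(T)`, `σ ∈ P_T`. -/
def symKernel {S : Type*} [MeasurableSpace S] (T : MTree S) : Measure (MTree S) :=
  ((PermSet T).ncard : ℝ≥0∞)⁻¹ •
    Measure.sum (fun σ : ↥(PermSet T) => Measure.dirac (permApply (σ : PermVec) T))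

/-- The symmetrization `ν^sym` of a law `ν` on labeled multitype plane trees. -/
def symLaw {S : Type*} [MeasurableSpace S] (ν : Measure (MTree S)) : Measure (MTree S) :=
  ν.bind symKernel

/-- A law is symmetric if it is equal to its symmetrization. -/
def IsSymmetricLaw {S : Type*} [MeasurableSpace S] (ν : Measure (MTree S)) : Prop :=
  symLaw ν = ν

/-! ### Valid laws -/

/-- Forget the displacements of a labeled tree. -/
def shape {S : Type*} (T : MTree S) : MTree S := ⟨T.verts, T.type, fun _ => 0⟩

/-- The vector of displacements from `v` to its (first `k`) children. -/
def dispVecAt {S : Type*} (T : MTree S) (v : Vertex) (k : ℕ) : Fin k → ℝ :=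
  fun i => T.disp (v ++ [(i : ℕ).succPNat])

/-- The child type vector of `v` (with `k` children). -/
def ctypeAt {S : Type*} (T : MTree S) (v : Vertex) (k : ℕ) : Fin k → S :=
  fun i => T.type (v ++ [(i : ℕ).succPNat])

/-- A family of displacement distributions: for each parent type and each child type vector of
each length `k`, a measure on `ℝ^k`. -/
abbrev DispFamily (S : Type*) : Type _ :=
  S → (k : ℕ) → (Fin k → S) → Measure (Fin k → ℝ)

/-- `ν` has displacement family `π`: conditionally on the underlying typed tree, the displacement
vectors at the vertices are independent, with laws given by `π` evaluated at the type of a vertex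
and its child type vector. -/
def HasDispFamily {S : Type*} [MeasurableSpace S] (ν : Measure (MTree S))
    (π : DispFamily S) : Prop :=
  (∀ r k s, IsProbabilityMeasure (π r k s)) ∧
  ∀ t : MTree S, ∀ B : (v : Vertex) → Set (Fin (nChild t.verts v) → ℝ),
    (∀ v, MeasurableSet (B v)) →
    ν {T | shape T = shape t ∧ ∀ v ∈ t.verts, dispVecAt T v (nChild t.verts v) ∈ B v}
      = ν {T | shape T = shape t}
        * ∏ v ∈ t.verts, π (t.type v) (nChild t.verts v) (ctypeAt t v (nChild t.verts v)) (B v)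

/-- A law on labeled multitype plane trees is valid if it is carried by plane trees, the law of
the underlying typed plane tree is symmetric, and the displacements admit a displacement family
as above. -/
def IsValidLaw {S : Type*} [MeasurableSpace S] (ν : Measure (MTree S)) : Prop :=
  ν {T | ¬ T.IsPlaneTree} = 0 ∧ IsSymmetricLaw (ν.map shape) ∧ ∃ π : DispFamily S, HasDispFamily ν π

/-! ### Convergence in distribution -/

/-- Convergence in distribution of a sequence of random elements (defined on possibly different
probability spaces) towards a limiting random element: the expectations of every bounded
continuous functional converge. -/
def TendstoInDist {Ω : ℕ → Type*} [∀ n, MeasurableSpace (Ω n)]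
    (P : ∀ n, Measure (Ω n)) {E : Type*} [TopologicalSpace E] (X : ∀ n, Ω n → E)
    {Ω₀ : Type*} [MeasurableSpace Ω₀] (P₀ : Measure Ω₀) (Y : Ω₀ → E) : Prop :=
  ∀ f : BoundedContinuousFunction E ℝ,
    Tendsto (fun n => ∫ ω, f (X n ω) ∂(P n)) atTop (𝓝 (∫ ω, f (Y ω) ∂P₀))

/-- Tightness of a family of laws of random elements of a topological space. -/
def TightSeq {E : Type*} [TopologicalSpace E] {Ω : ℕ → Type*} [∀ n, MeasurableSpace (Ω n)]
    (P : ∀ n, Measure (Ω n)) (X : ∀ n, Ω n → E) : Prop :=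
  ∀ ε : ℝ≥0∞, 0 < ε → ∃ K : Set E, IsCompact K ∧ ∀ n, P n {ω | X n ω ∉ K} ≤ ε

/-! ### Galton–Watson laws -/

instance {S : Type*} [MeasurableSpace S] : MeasurableSpace (List S) := ⊤

/-- The child type vector of `v`, as a list. -/
def ctypeList {S : Type*} (T : MTree S) (v : Vertex) : List S :=
  (List.range (nChild T.verts v)).map fun m => T.type (v ++ [m.succPNat])

/-- `ν` is the law of a multitype Galton–Watson tree with offspring distributions `p`:
the `p s` are permutation-invariant probability measures on finite type sequences, and the
probability that the typed tree equals a given finite plane tree `t` is the product over the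
vertices of `t` of the offspring probabilities of the child type vectors (times the probability
of the root type). -/
def IsGWLaw {S : Type*} [MeasurableSpace S] (ν : Measure (MTree S))
    (p : S → Measure (List S)) : Prop :=
  (∀ s, IsProbabilityMeasure (p s)) ∧
  (∀ s : S, ∀ l l' : List S, l.Perm l' → p s {l} = p s {l'}) ∧
  ∀ t : MTree S, t.IsPlaneTree →
    ν {T | T.verts = t.verts ∧ ∀ v ∈ t.verts, T.type v = t.type v}
      = ν {T | T.type [] = t.type []} * ∏ v ∈ t.verts, p (t.type v) {ctypeList t v}

/-- A tree is normalized if its type and displacement functions take default values off the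
vertex set, and (for unlabeled trees) all displacements vanish. -/
def Normalized {S : Type*} (s₀ : S) (T : MTree S) : Prop :=
  (∀ v ∉ T.verts, T.type v = s₀) ∧ T.disp = fun _ => 0

/-! ### Displacement families: symmetrization and centering -/

/-- The symmetrized displacement family `π^{sym}` defined by
`π^{u,sym}_s(B) = (1/k!) ∑_{σ ∈ 𝔖_k} π^u_{σ(s)}(σ(B))`. -/
def symFamily {S : Type*} (π : DispFamily S) : DispFamily S := fun r k s =>
  ((Nat.factorial k : ℝ≥0∞))⁻¹ •
    ∑ σ : Equiv.Perm (Fin k),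
      (π r k fun j => s (σ.symm j)).map fun x : Fin k → ℝ => fun j => x (σ j)

/-- A displacement family is locally centered if every coordinate of every displacement
distribution has mean zero. -/
def LocallyCentered {S : Type*} (π : DispFamily S) : Prop :=
  ∀ (r : S) (k : ℕ) (s : Fin k → S) (i : Fin k), (∫ x, x i ∂(π r k s)) = 0

/-- A displacement family is centered if, for every `k`, every parent type `r` and every vector
`z` of type counts summing to `k`, the sum over all ordered child type sequences with counts `z`
of the total mean displacement is zero. -/
def Centered {S : Type*} (π : DispFamily S) : Prop :=
  ∀ (k : ℕ) (r : S) (z : S →₀ ℕ), (z.sum fun _ n => n) = k →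
    (∑ᶠ s ∈ {s : Fin k → S | ∀ x : S,
        ((Finset.univ.filter fun i => s i = x).card = z x)},
      ∑ i : Fin k, ∫ x, x i ∂(π r k s)) = 0

/-! ### Subtrees spanned by finitely many vertices -/

/-- The vertex set of the subtree spanned by the vertices `r i` and their ancestors. -/
def spanVerts {k : ℕ} (r : Fin k → Vertex) : Finset Vertex :=
  insert ([] : Vertex) (Finset.univ.biUnion fun i => ((r i).inits).toFinset)

/-- The rank of the child index `i` of `p` among the child indices present in `s`. -/
def childRank (s : Finset Vertex) (p : Vertex) (i : ℕ+) : ℕ+ :=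
  ((s.filter fun w => ∃ j : ℕ+, j ≤ i ∧ w = p ++ [j]).card).toPNat'

def reindexAux (s : Finset Vertex) : Vertex → Vertex → Vertex
  | _, [] => []
  | p, i :: rest => childRank s p i :: reindexAux s (p ++ [i]) rest

/-- The Ulam–Harris label, in the plane tree with vertex set `s`, of the node corresponding to
the vertex `v ∈ s`: children are relabeled consecutively, preserving their order. -/
def reindex (s : Finset Vertex) (v : Vertex) : Vertex := reindexAux s [] v

/-- The set of child indices of `p` present in `s`. -/
def childIdxs (s : Finset Vertex) (p : Vertex) : Finset ℕ+ :=
  (s.filter fun w => ∃ i : ℕ+, w = p ++ [i]).image fun w => w.getLastD 1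

/-- The `m`-th smallest child index of `p` present in `s`. -/
def nthChildIndex (s : Finset Vertex) (p : Vertex) (m : ℕ+) : ℕ+ :=
  ((childIdxs s p).sort (· ≤ ·)).getD ((m : ℕ) - 1) 1

def unIndexAux (s : Finset Vertex) : Vertex → Vertex → Vertex
  | _, [] => []
  | p, m :: rest =>
      nthChildIndex s p m :: unIndexAux s (p ++ [nthChildIndex s p m]) rest

/-- The inverse of `reindex s`. -/
def unIndex (s : Finset Vertex) (w : Vertex) : Vertex := unIndexAux s [] w

/-- The labeled subtree of `T` with vertex set `s ⊆ T.verts`, viewed as a plane tree (with the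
plane structure, the types and the displacements inherited from `T`). -/
def spanTree {S : Type*} (T : MTree S) (s : Finset Vertex) : MTree S :=
  ⟨s.image (reindex s), fun w => T.type (unIndex s w), fun w => T.disp (unIndex s w)⟩

/-- The labeled subtree of `T` with vertex set `s`, with the displacements on child edges of
branchpoints replaced by `0` (the modified labeling `d⟨·⟩`). -/
def spanTreeMod {S : Type*} (T : MTree S) (s : Finset Vertex) : MTree S :=
  ⟨(spanTree T s).verts, (spanTree T s).type,
    fun w => if nChild (spanTree T s).verts w.dropLast = 1 then (spanTree T s).disp w else 0⟩

/-- `R` is a uniform sample of `k` vertices from the random labeled tree `X`: conditionally on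
`X`, the coordinates of `R` are independent and uniformly distributed on the vertex set of `X`. -/
def UniformSample {Ω : Type*} [MeasurableSpace Ω] (P : Measure Ω) {S : Type*} [MeasurableSpace S]
    (X : Ω → MTree S) {k : ℕ} (R : Ω → Fin k → Vertex) : Prop :=
  ∀ A : Set (MTree S), MeasurableSet A → ∀ r : Fin k → Vertex,
    P {ω | X ω ∈ A ∧ R ω = r}
      = ∫⁻ ω in {ω | X ω ∈ A},
          (if ∀ i, r i ∈ (X ω).verts then (((X ω).verts.card : ℝ≥0∞) ^ k)⁻¹ else 0) ∂P

/-! ### Lexicographic enumeration, height process -/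

/-- The vertices of `t` in lexicographic order. -/
def lexEnum (t : Finset Vertex) : List Vertex := t.sort (· ≤ ·)

/-- The `i`-th vertex in lexicographic order (`v_{|t|} = v_0` by convention, since `v_0` is the
root `[]`, which is also the default value). -/
def lexVertex (t : Finset Vertex) (i : ℕ) : Vertex := (lexEnum t).getD i []

/-- The height process `H_t`, as a function on `ℝ`. -/
def heightFun {S : Type*} (T : MTree S) (s : ℝ) : ℝ :=
  interpFun T.verts.card (fun i => ((lexVertex T.verts i).length : ℝ)) s

/-- The lexicographic label process `S_t`, as a function on `ℝ`. -/
def lexLabelFun {S : Type*} (T : MTree S) (s : ℝ) : ℝ :=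
  interpFun T.verts.card (fun i => labelOf T (lexVertex T.verts i)) s

/-- The height process `H_t`, as a continuous map on `[0,1]`. -/
def heightProcess {S : Type*} (T : MTree S) : C(unitInterval, ℝ) :=
  interpMap T.verts.card fun i => ((lexVertex T.verts i).length : ℝ)

/-- The lexicographic label process `S_t`, as a continuous map on `[0,1]`. -/
def lexLabelProcess {S : Type*} (T : MTree S) : C(unitInterval, ℝ) :=
  interpMap T.verts.card fun i => labelOf T (lexVertex T.verts i)

/-- `j_t(i) = 2i - h(v_i)` for `i < |t|`, and `j_t(i) = 2|t| - 2` otherwise. -/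
def jIdx (t : Finset Vertex) (i : ℕ) : ℕ :=
  if i < t.card then 2 * i - (lexVertex t i).length else 2 * t.card - 2

/-- `φ_t(s) = |t|⁻¹ · sup {i ≤ |t| : j_t(i) ≤ s(2|t|-2)}`. -/
def phi (t : Finset Vertex) (s : ℝ) : ℝ :=
  ((sSup {i : ℕ | i ≤ t.card ∧ (jIdx t i : ℝ) ≤ s * (2 * t.card - 2)} : ℕ) : ℝ) / t.card

/-- The increasing reordering of the finite vector `f`. -/
def sortFun {k : ℕ} (f : Fin k → ℝ) (i : ℕ) : ℝ :=
  ((List.ofFn f).insertionSort (· ≤ ·)).getD i 0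

instance : MeasurableSpace C(unitInterval, ℝ) := borel _


section Aux

variable {S : Type*}

lemma permWordAux_length (σ : PermVec) :
    ∀ (v p : Vertex), (permWordAux σ p v).length = v.length
  | [], _ => rfl
  | i :: rest, p => by
      simp [permWordAux, permWordAux_length σ rest (p ++ [i])]

lemma lcpLen_permWordAux (σ : PermVec) :
    ∀ (u v p : Vertex), lcpLen (permWordAux σ p u) (permWordAux σ p v) = lcpLen u v
  | [], v, p => by cases v <;> simp [permWordAux, lcpLen]
  | a :: u, [], p => by simp [permWordAux, lcpLen]
  | a :: u, b :: v, p => by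
      by_cases h : a = b
      · subst h
        simp [permWordAux, lcpLen, lcpLen_permWordAux σ u v (p ++ [a])]
      · have h2 : σ p a ≠ σ p b := fun hc => h ((σ p).injective hc)
        simp [permWordAux, lcpLen, h, h2]

lemma treeDist_permWord (σ : PermVec) (u v : Vertex) :
    treeDist (permWord σ u) (permWord σ v) = treeDist u v := by
  unfold treeDist permWord
  rw [permWordAux_length, permWordAux_length, lcpLen_permWordAux]

lemma permWordAux_take (σ : PermVec) :
    ∀ (v p : Vertex) (m : ℕ), (permWordAux σ p v).take m = permWordAux σ p (v.take m)
  | [], p, m => by simp [permWordAux]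
  | i :: rest, p, 0 => by simp [permWordAux]
  | i :: rest, p, m + 1 => by
      simp [permWordAux, List.take_succ_cons, permWordAux_take σ rest (p ++ [i]) m]

lemma invWordAux_permWordAux (σ : PermVec) :
    ∀ (v p : Vertex), invWordAux σ p (permWordAux σ p v) = v
  | [], p => rfl
  | i :: rest, p => by
      simp [permWordAux, invWordAux, Equiv.Perm.inv_def, Equiv.symm_apply_apply,
        invWordAux_permWordAux σ rest (p ++ [i])]

lemma invWord_permWord (σ : PermVec) (v : Vertex) : invWord σ (permWord σ v) = v :=
  invWordAux_permWordAux σ v []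

lemma labelOf_permApply (σ : PermVec) (T : MTree S) (v : Vertex) :
    labelOf (permApply σ T) (permWord σ v) = labelOf T v := by
  unfold labelOf permApply
  rw [show (permWord σ v).length = v.length from permWordAux_length σ v []]
  refine Finset.sum_congr rfl fun j _ => ?_
  simp only [permWord, permWordAux_take σ v [] (j + 1)]
  rw [show invWord σ (permWordAux σ [] (v.take (j + 1))) = v.take (j + 1) from
    invWordAux_permWordAux σ (v.take (j + 1)) []]

/-- The pair event on labeled trees. -/
def badSet (K M : ℝ) : Set (MTree S) :=
  {T | ∃ v ∈ T.verts, ∃ w ∈ T.verts,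
      (treeDist v w : ℝ) ≤ K ∧ M < |labelOf T v - labelOf T w|}

lemma permApply_mem_badSet {K M : ℝ} {T : MTree S} (σ : PermVec)
    (hT : T ∈ badSet (S := S) K M) : permApply σ T ∈ badSet (S := S) K M := by
  obtain ⟨v, hv, w, hw, hd, hl⟩ := hT
  refine ⟨permWord σ v, ?_, permWord σ w, ?_, ?_, ?_⟩
  · exact Finset.mem_image_of_mem _ hv
  · exact Finset.mem_image_of_mem _ hw
  · rwa [treeDist_permWord]
  · rwa [labelOf_permApply, labelOf_permApply]

lemma theta_mem {t : Finset Vertex} (ht : IsPlaneTreeSet t) : ∀ i, theta t i ∈ t := by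
  intro i
  induction i with
  | zero => exact ht.1
  | succ n ih =>
      unfold theta contourHist
      simp only
      split_ifs with hc
      · simp only [List.headI_cons]
        exact (Nat.sInf_mem hc).1
      · simp only [List.headI_cons]
        exact ht.2.1 _ ih _ (List.dropLast_prefix _)

end Aux
section Aux2
set_option linter.unusedSectionVars false

variable {S : Type*} [MeasurableSpace S]

lemma measurable_triple :
    Measurable (fun T : MTree S => (T.verts, T.type, T.disp)) :=
  measurable_iff_comap_le.2 le_rfl

lemma measurable_verts : Measurable (fun T : MTree S => T.verts) :=
  measurable_fst.comp measurable_triple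

lemma measurable_disp : Measurable (fun T : MTree S => T.disp) :=
  (measurable_snd.comp measurable_snd).comp measurable_triple

lemma measurable_labelOf (v : Vertex) : Measurable (fun T : MTree S => labelOf T v) := by
  unfold labelOf
  exact Finset.measurable_sum _ fun j _ =>
    (measurable_pi_apply (v.take (j + 1))).comp measurable_disp

lemma measurableSet_vertMem (v : Vertex) :
    MeasurableSet {T : MTree S | v ∈ T.verts} :=
  measurable_verts (show MeasurableSet {s : Finset Vertex | v ∈ s} from trivial)

lemma measurableSet_badSet (K M : ℝ) : MeasurableSet (badSet (S := S) K M) := by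
  have : badSet (S := S) K M =
      ⋃ p : Vertex × Vertex,
        ({T : MTree S | p.1 ∈ T.verts} ∩ {T | p.2 ∈ T.verts}
          ∩ {T | (treeDist p.1 p.2 : ℝ) ≤ K}
          ∩ {T | M < |labelOf T p.1 - labelOf T p.2|}) := by
    ext T
    simp only [badSet, Set.mem_setOf_eq, Set.mem_iUnion, Set.mem_inter_iff, Prod.exists]
    tauto
  rw [this]
  refine MeasurableSet.iUnion fun p => ?_
  refine (((measurableSet_vertMem p.1).inter (measurableSet_vertMem p.2)).inter
    (MeasurableSet.const _)).inter ?_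
  exact measurableSet_lt measurable_const
    ((measurable_labelOf p.1).sub (measurable_labelOf p.2)).abs

lemma measurableSet_notPlane :
    MeasurableSet {T : MTree S | ¬ T.IsPlaneTree} :=
  measurable_verts (show MeasurableSet {s : Finset Vertex | ¬ IsPlaneTreeSet s} from trivial)

lemma permSet_fix {T : MTree S} {σ : PermVec} (hσ : σ ∈ PermSet T)
    (v : Vertex) (i : ℕ+) (hi : nChild T.verts v < (i : ℕ)) : σ v i = i := by
  by_cases hv : v ∈ T.verts
  · exact (hσ.1 v hv).2 i hi
  · rw [hσ.2 v hv]; rfl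

lemma permSet_finite (T : MTree S) : (PermSet T).Finite := by
  rw [← Set.finite_coe_iff]
  refine Finite.of_injective
    (fun σ : ↥(PermSet T) =>
      (fun v : ↥T.verts => fun m : Fin (nChild T.verts v) =>
        (⟨((σ : PermVec) v m.val.succPNat : ℕ),
          Nat.lt_succ_of_le ((σ.2.1 v v.2).1 m.val.succPNat
            (by have hm := m.2; simp only [Nat.succPNat_coe]; omega))⟩ :
          Fin (nChild T.verts v + 1)))) ?_
  rintro ⟨σ, hσ⟩ ⟨τ, hτ⟩ h
  apply Subtype.ext
  funext v
  apply Equiv.ext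
  intro i
  show σ v i = τ v i
  by_cases hv : v ∈ T.verts
  · by_cases hi : (i : ℕ) ≤ nChild T.verts v
    · have hm : ((i : ℕ) - 1) < nChild T.verts v := by
        have := i.pos; omega
      have := congrFun (congrFun h ⟨v, hv⟩) ⟨(i : ℕ) - 1, hm⟩
      simp only [Fin.mk.injEq] at this
      have hsucc : ((i : ℕ) - 1).succPNat = i := by
        have := i.pos
        apply PNat.coe_injective
        simp [Nat.succPNat]
        omega
      rw [hsucc] at this
      exact PNat.coe_injective this
    · rw [permSet_fix hσ v i (lt_of_not_ge hi), permSet_fix hτ v i (lt_of_not_ge hi)]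
  · rw [hσ.2 v hv, hτ.2 v hv]

lemma permSet_nonempty (T : MTree S) : (PermSet T).Nonempty := by
  refine ⟨fun _ => 1, ⟨fun v hv => ⟨fun i hi => ?_, fun i hi => rfl⟩, fun v hv => rfl⟩⟩
  simpa using hi

end Aux2
lemma symKernel_apply_one {S : Type*} [MeasurableSpace S] {T : MTree S} {E0 : Set (MTree S)}
    (hE : MeasurableSet E0) (hT : ∀ σ : PermVec, σ ∈ PermSet T → permApply σ T ∈ E0) :
    symKernel T E0 = 1 := by
  have hfin := permSet_finite T
  haveI : Finite ↥(PermSet T) := hfin.to_subtype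
  haveI : Fintype ↥(PermSet T) := Fintype.ofFinite _
  unfold symKernel
  rw [Measure.smul_apply, Measure.sum_apply _ hE]
  have hone : ∀ σ : ↥(PermSet T), Measure.dirac (permApply (σ : PermVec) T) E0 = 1 := by
    intro σ
    rw [Measure.dirac_apply' _ hE, Set.indicator_of_mem (hT σ σ.2)]
    rfl
  rw [tsum_congr hone, tsum_fintype]
  simp only [Finset.sum_const, Finset.card_univ, smul_eq_mul, mul_one, nsmul_eq_mul]
  have hcard : (Fintype.card ↥(PermSet T) : ℕ) = (PermSet T).ncard := by
    rw [← Nat.card_coe_set_eq, Nat.card_eq_fintype_card]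
  rw [hcard]
  exact ENNReal.inv_mul_cancel
    (Nat.cast_ne_zero.2 ((Set.ncard_pos hfin).2 (permSet_nonempty T)).ne')
    (ENNReal.natCast_ne_top _)
/-- Lemma 3.2. Let `(T,D)` be a random labeled plane tree and `(T^sym,D^sym)`
its symmetrization. For any constants `k, K, M`:
`P(sup_{|i-j| ≤ k} |ℓ(θ_T(i)) - ℓ(θ_T(j))| > M)` is at most
`P(sup_{|i-j| ≤ k} dist(θ_T(i),θ_T(j)) > K) + P(sup_{dist(v,w) ≤ K} |ℓ^sym(v) - ℓ^sym(w)| > M)`. -/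
theorem statement6 {S : Type*} [Countable S] [MeasurableSpace S]
    {Ω : Type*} [MeasurableSpace Ω] (P : Measure Ω) (hP : IsProbabilityMeasure P)
    (X : Ω → MTree S) (hX : Measurable X)
    (hplane : (P.map X) {T | ¬ T.IsPlaneTree} = 0)
    {Ω' : Type*} [MeasurableSpace Ω'] (P' : Measure Ω') (hP' : IsProbabilityMeasure P')
    (Xs : Ω' → MTree S) (hXs : Measurable Xs) (hsym : P'.map Xs = symLaw (P.map X))
    (k : ℕ) (K M : ℝ) :
    P {ω | ∃ i j : ℕ, i ≤ 2 * (X ω).verts.card - 2 ∧ j ≤ 2 * (X ω).verts.card - 2 ∧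
        i ≤ j + k ∧ j ≤ i + k ∧
        M < |labelOf (X ω) (theta (X ω).verts i) - labelOf (X ω) (theta (X ω).verts j)|}
      ≤ P {ω | ∃ i j : ℕ, i ≤ 2 * (X ω).verts.card - 2 ∧ j ≤ 2 * (X ω).verts.card - 2 ∧
            i ≤ j + k ∧ j ≤ i + k ∧
            K < (treeDist (theta (X ω).verts i) (theta (X ω).verts j) : ℝ)}
        + P' {ω | ∃ v ∈ (Xs ω).verts, ∃ w ∈ (Xs ω).verts,
            (treeDist v w : ℝ) ≤ K ∧ M < |labelOf (Xs ω) v - labelOf (Xs ω) w|} := by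
  classical
  set ν := P.map X with hν
  have hE : MeasurableSet (badSet (S := S) K M) := measurableSet_badSet K M
  set A := {ω | ∃ i j : ℕ, i ≤ 2 * (X ω).verts.card - 2 ∧ j ≤ 2 * (X ω).verts.card - 2 ∧
      i ≤ j + k ∧ j ≤ i + k ∧
      M < |labelOf (X ω) (theta (X ω).verts i) - labelOf (X ω) (theta (X ω).verts j)|} with hA
  set B := {ω | ∃ i j : ℕ, i ≤ 2 * (X ω).verts.card - 2 ∧ j ≤ 2 * (X ω).verts.card - 2 ∧
      i ≤ j + k ∧ j ≤ i + k ∧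
      K < (treeDist (theta (X ω).verts i) (theta (X ω).verts j) : ℝ)} with hB
  set N := {ω | ¬ (X ω).IsPlaneTree} with hN
  have hN0 : P N = 0 := by
    have h := Measure.map_apply (μ := P) hX (measurableSet_notPlane (S := S))
    rw [← hν] at h
    have h2 : P N = ν {T : MTree S | ¬ T.IsPlaneTree} := h.symm
    rw [h2, hplane]
  have hincl : A ⊆ B ∪ X ⁻¹' badSet (S := S) K M ∪ N := by
    intro ω hω
    by_cases hp : (X ω).IsPlaneTree
    · obtain ⟨i, j, h1, h2, h3, h4, h5⟩ := hω
      rcases le_or_gt ((treeDist (theta (X ω).verts i) (theta (X ω).verts j) : ℝ)) K with hd | hd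
      · refine Or.inl (Or.inr ?_)
        exact ⟨theta (X ω).verts i, theta_mem hp i, theta (X ω).verts j, theta_mem hp j, hd, h5⟩
      · exact Or.inl (Or.inl ⟨i, j, h1, h2, h3, h4, hd⟩)
    · exact Or.inr hp
  have hP'eq : P' {ω | ∃ v ∈ (Xs ω).verts, ∃ w ∈ (Xs ω).verts,
      (treeDist v w : ℝ) ≤ K ∧ M < |labelOf (Xs ω) v - labelOf (Xs ω) w|}
      = symLaw ν (badSet (S := S) K M) := by
    rw [← hsym, Measure.map_apply hXs hE]
    rfl
  have hle : ν (badSet (S := S) K M) ≤ symLaw ν (badSet (S := S) K M) := by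
    by_cases hm : AEMeasurable (symKernel (S := S)) ν
    · rw [symLaw, Measure.bind, Measure.join_apply hE,
        lintegral_map' (Measure.measurable_coe hE).aemeasurable hm]
      calc ν (badSet (S := S) K M)
          = ∫⁻ T, (badSet (S := S) K M).indicator 1 T ∂ν :=
            (lintegral_indicator_one hE).symm
        _ ≤ ∫⁻ T, symKernel T (badSet (S := S) K M) ∂ν := by
            refine lintegral_mono fun T => ?_
            by_cases hT : T ∈ badSet (S := S) K M
            · simp only [Set.indicator_of_mem hT, Pi.one_apply]
              rw [symKernel_apply_one hE fun σ _ => permApply_mem_badSet σ hT]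
            · simp [Set.indicator_of_notMem hT]
    · exfalso
      have h0 : symLaw ν Set.univ = 0 := by
        rw [symLaw, Measure.bind, Measure.map_of_not_aemeasurable hm,
          Measure.join_apply MeasurableSet.univ]
        simp
      have h1 : (P'.map Xs) Set.univ = 1 := by
        rw [Measure.map_apply hXs MeasurableSet.univ]
        simp [measure_univ]
      rw [hsym, h0] at h1
      simp at h1
  calc P A ≤ P (B ∪ X ⁻¹' badSet (S := S) K M ∪ N) := measure_mono hincl
    _ ≤ P (B ∪ X ⁻¹' badSet (S := S) K M) + P N := measure_union_le _ _
    _ = P (B ∪ X ⁻¹' badSet (S := S) K M) := by rw [hN0, add_zero]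
    _ ≤ P B + P (X ⁻¹' badSet (S := S) K M) := measure_union_le _ _
    _ = P B + ν (badSet (S := S) K M) := by rw [hν, Measure.map_apply hX hE]
    _ ≤ P B + symLaw ν (badSet (S := S) K M) := add_le_add le_rfl hle
    _ = _ := by rw [hP'eq]

end TreeSym
end
end

section
/- Let t be a rooted plane tree and list its vertices in lexicographic order as v_0 = ∅, v_1, …, v_{|t|−1}, with v_{|t|} := v_0. Then sup over 0 ≤ s ≤ 1 of |C_t(s) − H_t(φ_t(s))| ≤ 2 + max over 0 ≤ i < |t| of dist_t(v_i, v_{i+1}). -/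
open MeasureTheory Filter Topology
open scoped ENNReal NNReal Classical

noncomputable section

namespace TreeSym

/-! ### Auxiliary material for Statement 13 -/

section Statement13Aux

/-! #### Lexicographic order facts on `Vertex` -/

private lemma s13_prefix_le {v w : Vertex} (h : v <+: w) : v ≤ w := by
  obtain ⟨s, rfl⟩ := h
  cases s with
  | nil => simp
  | cons a s =>
    refine le_of_lt ?_
    show List.Lex (· < ·) v (v ++ a :: s)
    have h0 : List.Lex (· < ·) ([] : Vertex) (a :: s) := List.Lex.nil
    simpa using List.Lex.append_left (· < ·) h0 v

private lemma s13_lt_append (v : Vertex) (c : ℕ+) (y : Vertex) : v < v ++ c :: y := by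
  show List.Lex (· < ·) v (v ++ c :: y)
  have h0 : List.Lex (· < ·) ([] : Vertex) (c :: y) := List.Lex.nil
  simpa using List.Lex.append_left (· < ·) h0 v

private lemma s13_le_nil {v : Vertex} (h : v ≤ []) : v = [] :=
  le_antisymm h (by cases v with | nil => exact le_rfl | cons a w => exact le_of_lt (by simpa using s13_lt_append [] a w))

private lemma s13_append_cons_lt (p : Vertex) {a b : ℕ+} (x y : Vertex) (hab : a < b) :
    p ++ a :: x < p ++ b :: y :=
  show List.Lex (· < ·) _ _ from List.Lex.append_left _ (List.Lex.rel hab) p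

private lemma s13_lt_decomp {v w : Vertex} (h : v < w) :
    v <+: w ∨ ∃ (p x y : Vertex) (a b : ℕ+), a < b ∧ v = p ++ a :: x ∧ w = p ++ b :: y := by
  have h' : List.Lex (· < ·) v w := h
  clear h
  induction h' with
  | nil => left; exact List.nil_prefix
  | @cons a l₁ l₂ hl ih =>
    rcases ih with hp | ⟨p, x, y, a', b', hab, rfl, rfl⟩
    · left; exact List.cons_prefix_cons.mpr ⟨rfl, hp⟩
    · right; exact ⟨a :: p, x, y, a', b', hab, rfl, rfl⟩
  | @rel a₁ l₁ a₂ l₂ hr =>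
    right; exact ⟨[], l₁, l₂, a₁, a₂, hr, rfl, rfl⟩

private lemma s13_pnat_lt_succ (a : ℕ+) : a < a + 1 := by
  rw [← PNat.coe_lt_coe, PNat.add_coe, PNat.one_coe]
  omega

private lemma s13_between {v w : Vertex} (h : v < w) : v ++ [1] ≤ w := by
  rcases s13_lt_decomp h with hp | ⟨p, x, y, a, b, hab, rfl, rfl⟩
  · obtain ⟨s, rfl⟩ := hp
    cases s with
    | nil => exact absurd h (by simp)
    | cons c y =>
      rcases eq_or_lt_of_le c.one_le with hc | hc
      · exact s13_prefix_le ⟨y, by rw [← hc]; simp⟩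
      · exact le_of_lt (s13_append_cons_lt v [] y hc)
  · refine le_of_lt ?_
    have h1 : p ++ a :: x ++ [1] = p ++ a :: (x ++ [1]) := by simp
    rw [h1]
    exact s13_append_cons_lt p (x ++ [1]) y hab

/-! #### Facts about the lexicographic enumeration -/

private lemma s13_lexEnum_length (t : Finset Vertex) : (lexEnum t).length = t.card :=
  Finset.length_sort _

private lemma s13_mem_lexEnum {t : Finset Vertex} {w : Vertex} : w ∈ lexEnum t ↔ w ∈ t :=
  Finset.mem_sort _

private lemma s13_lexVertex_eq_get {t : Finset Vertex} {i : ℕ} (hi : i < t.card) :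
    lexVertex t i = (lexEnum t).get ⟨i, by rwa [s13_lexEnum_length]⟩ := by
  unfold lexVertex
  rw [List.getD_eq_getElem _ _ (by rwa [s13_lexEnum_length])]
  simp

private lemma s13_lexVertex_mem {t : Finset Vertex} {i : ℕ} (hi : i < t.card) :
    lexVertex t i ∈ t := by
  rw [s13_lexVertex_eq_get hi]
  exact s13_mem_lexEnum.mp (List.get_mem _ _)

private lemma s13_lexVertex_strictMono {t : Finset Vertex} {i j : ℕ} (hij : i < j)
    (hj : j < t.card) : lexVertex t i < lexVertex t j := by
  rw [s13_lexVertex_eq_get (lt_trans hij hj), s13_lexVertex_eq_get hj]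
  exact (Finset.sortedLT_sort t).strictMono_get (Fin.mk_lt_mk.mpr hij)

private lemma s13_lexVertex_mono {t : Finset Vertex} {i j : ℕ} (hij : i ≤ j)
    (hj : j < t.card) : lexVertex t i ≤ lexVertex t j := by
  rcases eq_or_lt_of_le hij with rfl | h
  · exact le_rfl
  · exact le_of_lt (s13_lexVertex_strictMono h hj)

private lemma s13_exists_index {t : Finset Vertex} {w : Vertex} (hw : w ∈ t) :
    ∃ i, i < t.card ∧ w = lexVertex t i := by
  rw [← s13_mem_lexEnum] at hw
  obtain ⟨⟨i, hi⟩, hg⟩ := List.mem_iff_get.mp hw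
  have hi' : i < t.card := by rwa [s13_lexEnum_length] at hi
  exact ⟨i, hi', by rw [s13_lexVertex_eq_get hi', ← hg]⟩

private lemma s13_lexVertex_zero {t : Finset Vertex} (h0 : ([] : Vertex) ∈ t) :
    lexVertex t 0 = [] := by
  obtain ⟨i, hi, hw⟩ := s13_exists_index h0
  rcases Nat.eq_zero_or_pos i with rfl | hpos
  · exact hw.symm
  · exfalso
    have := s13_lexVertex_strictMono hpos hi
    rw [← hw] at this
    exact absurd this (not_lt.mpr (by generalize lexVertex t 0 = v; cases v with | nil => exact le_rfl | cons a w => exact le_of_lt (by simpa using s13_lt_append [] a w)))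

private lemma s13_lexVertex_card {t : Finset Vertex} : lexVertex t t.card = [] :=
  List.getD_eq_default _ _ (le_of_eq (s13_lexEnum_length t))

private lemma s13_succ_min {t : Finset Vertex} {i : ℕ} (hi : i + 1 < t.card) {w : Vertex}
    (hw : w ∈ t) (hlt : lexVertex t i < w) : lexVertex t (i + 1) ≤ w := by
  obtain ⟨j, hj, rfl⟩ := s13_exists_index hw
  have hij : i < j := by
    by_contra hle
    push_neg at hle
    exact absurd (s13_lexVertex_mono hle (lt_trans (Nat.lt_succ_self i) hi)) (not_le.mpr hlt)
  exact s13_lexVertex_mono hij hj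

private lemma s13_le_last {t : Finset Vertex} {w : Vertex} (hw : w ∈ t) :
    w ≤ lexVertex t (t.card - 1) := by
  obtain ⟨j, hj, rfl⟩ := s13_exists_index hw
  exact s13_lexVertex_mono (by omega) (by omega)

/-! #### Successor structure in a plane tree -/

private lemma s13_succ_struct {t : Finset Vertex} (ht : IsPlaneTreeSet t) {i : ℕ}
    (hi : i + 1 < t.card) :
    ∃ (p : Vertex) (c : ℕ+), p <+: lexVertex t i ∧ lexVertex t (i + 1) = p ++ [c] ∧
      (∀ m : ℕ+, m < c → p ++ [m] ∈ t → p ++ [m] ≤ lexVertex t i) ∧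
      (p = lexVertex t i ∨ ∃ a : ℕ+, p ++ [a] <+: lexVertex t i ∧ c = a + 1) := by
  set v := lexVertex t i with hv_def
  set v' := lexVertex t (i + 1) with hv'_def
  have hvv' : v < v' := s13_lexVertex_strictMono (Nat.lt_succ_self i) hi
  have hv't : v' ∈ t := s13_lexVertex_mem hi
  have hmin : ∀ w ∈ t, v < w → v' ≤ w := fun w hw h => s13_succ_min hi hw h
  rcases s13_lt_decomp hvv' with hp | ⟨q, x, y, a, b, hab, hveq, hweq⟩
  · -- v is a prefix of v' : then v' = v ++ [1]
    obtain ⟨s, hs⟩ := hp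
    cases s with
    | nil => rw [← hs] at hvv'; exact absurd hvv' (by simp)
    | cons c y =>
      have hc1 : v ++ [1] ∈ t := by
        have hmem : v ++ [c] ∈ t := by
          refine ht.2.1 v' hv't _ ⟨y, ?_⟩
          rw [← hs]; simp
        exact ht.2.2 v c 1 hmem c.one_le
      have h1 : v' ≤ v ++ [1] := hmin _ hc1 (s13_lt_append v 1 [])
      have h2 : v ++ [1] ≤ v' := s13_between hvv'
      have hv'eq : v' = v ++ [1] := le_antisymm h1 h2
      refine ⟨v, 1, List.prefix_refl v, hv'eq, ?_, Or.inl rfl⟩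
      intro m hm
      exact absurd hm (not_lt.mpr m.one_le)
  · -- v and v' diverge
    have hqb : q ++ [b] ∈ t := by
      refine ht.2.1 v' hv't _ ⟨y, ?_⟩
      rw [hweq]; simp
    have hab' : a + 1 ≤ b := PNat.add_one_le_iff.mpr hab
    have hqa1 : q ++ [a + 1] ∈ t := ht.2.2 q b (a + 1) hqb hab'
    have h1 : v' ≤ q ++ [a + 1] := by
      refine hmin _ hqa1 ?_
      rw [hveq]
      exact s13_append_cons_lt q x [] (s13_pnat_lt_succ a)
    have h2 : q ++ [a + 1] ≤ v' := by
      rcases eq_or_lt_of_le hab' with heq | hlt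
      · rw [hweq, ← heq]
        exact s13_prefix_le ⟨y, by simp⟩
      · rw [hweq]
        exact le_of_lt (s13_append_cons_lt q [] y hlt)
    have hv'eq : v' = q ++ [a + 1] := le_antisymm h1 h2
    refine ⟨q, a + 1, ⟨a :: x, hveq.symm⟩, hv'eq, ?_, Or.inr ⟨a, ⟨x, by rw [hveq]; simp⟩, rfl⟩⟩
    intro m hm hmt
    rcases eq_or_lt_of_le (PNat.lt_add_one_iff.mp hm) with heq | hlt
    · subst heq
      exact s13_prefix_le ⟨x, by rw [hveq]; simp⟩
    · rw [hveq]
      exact le_of_lt (s13_append_cons_lt q [] x hlt)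

private lemma s13_lexVertex_length_le {t : Finset Vertex} (ht : IsPlaneTreeSet t) :
    ∀ i, i < t.card → (lexVertex t i).length ≤ i := by
  intro i
  induction i with
  | zero => intro _; rw [s13_lexVertex_zero ht.1]; simp
  | succ i ih =>
    intro hi1
    have hi : i < t.card := lt_trans (Nat.lt_succ_self i) hi1
    obtain ⟨p, c, hpv, hv'eq, -, -⟩ := s13_succ_struct ht hi1
    have h1 : p.length ≤ (lexVertex t i).length := hpv.length_le
    have h2 : (lexVertex t (i + 1)).length = p.length + 1 := by rw [hv'eq]; simp
    have := ih hi
    omega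


section Statement13Contour

/-! #### Contour exploration machinery -/

private lemma s13_hist_succ_pos {t : Finset Vertex} {k : ℕ}
    (h : ∃ m : ℕ, theta t k ++ [m.succPNat] ∈ t ∧ theta t k ++ [m.succPNat] ∉ contourHist t k) :
    contourHist t (k + 1) =
      (theta t k ++ [(sInf {m : ℕ | theta t k ++ [m.succPNat] ∈ t ∧
        theta t k ++ [m.succPNat] ∉ contourHist t k}).succPNat]) :: contourHist t k := by
  rw [contourHist]
  exact if_pos h

private lemma s13_hist_succ_neg {t : Finset Vertex} {k : ℕ}
    (h : ¬ ∃ m : ℕ, theta t k ++ [m.succPNat] ∈ t ∧ theta t k ++ [m.succPNat] ∉ contourHist t k) :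
    contourHist t (k + 1) = (theta t k).dropLast :: contourHist t k := by
  rw [contourHist]
  exact if_neg h

private lemma s13_theta_zero (t : Finset Vertex) : theta t 0 = [] := rfl

private lemma s13_theta_succ_pos {t : Finset Vertex} {k : ℕ}
    (h : ∃ m : ℕ, theta t k ++ [m.succPNat] ∈ t ∧ theta t k ++ [m.succPNat] ∉ contourHist t k) :
    theta t (k + 1) = theta t k ++ [(sInf {m : ℕ | theta t k ++ [m.succPNat] ∈ t ∧
        theta t k ++ [m.succPNat] ∉ contourHist t k}).succPNat] := by
  show (contourHist t (k + 1)).headI = _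
  rw [s13_hist_succ_pos h]
  rfl

private lemma s13_theta_succ_neg {t : Finset Vertex} {k : ℕ}
    (h : ¬ ∃ m : ℕ, theta t k ++ [m.succPNat] ∈ t ∧ theta t k ++ [m.succPNat] ∉ contourHist t k) :
    theta t (k + 1) = (theta t k).dropLast := by
  show (contourHist t (k + 1)).headI = _
  rw [s13_hist_succ_neg h]
  rfl

private lemma s13_theta_lip_step (t : Finset Vertex) (k : ℕ) :
    |((theta t (k + 1)).length : ℝ) - ((theta t k).length : ℝ)| ≤ 1 := by
  by_cases h : ∃ m : ℕ, theta t k ++ [m.succPNat] ∈ t ∧ theta t k ++ [m.succPNat] ∉ contourHist t k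
  · rw [s13_theta_succ_pos h]
    simp
  · rw [s13_theta_succ_neg h, List.length_dropLast]
    rcases Nat.eq_zero_or_pos (theta t k).length with h0 | h0
    · rw [h0]; norm_num
    · rw [Nat.cast_sub h0]
      simp

private lemma s13_theta_lip (t : Finset Vertex) (a : ℕ) :
    ∀ r : ℕ, |((theta t (a + r)).length : ℝ) - ((theta t a).length : ℝ)| ≤ r := by
  intro r
  induction r with
  | zero => simp
  | succ r ih =>
    have h1 := s13_theta_lip_step t (a + r)
    have h2 := abs_sub_le ((theta t (a + r + 1)).length : ℝ) ((theta t (a + r)).length : ℝ)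
      ((theta t a).length : ℝ)
    have : a + (r + 1) = a + r + 1 := by omega
    rw [this]
    push_cast
    push_cast at ih
    linarith

/-- Backtracking along the ancestors of `v`. -/
private lemma s13_backtrack {t : Finset Vertex} (ht : IsPlaneTreeSet t) {v : Vertex}
    (hv : v ∈ t) {k D : ℕ} (hD : D ≤ v.length)
    (hhead : theta t k = v)
    (hset : ∀ w, w ∈ contourHist t k ↔ w ∈ t ∧ w ≤ v)
    (hcond : ∀ r, r < D → ∀ m : ℕ+,
      v.take (v.length - r) ++ [m] ∈ t → v.take (v.length - r) ++ [m] ≤ v) :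
    ∀ r, r ≤ D → theta t (k + r) = v.take (v.length - r) ∧
      ∀ w, w ∈ contourHist t (k + r) ↔ w ∈ t ∧ w ≤ v := by
  intro r
  induction r with
  | zero =>
    intro _
    constructor
    · simpa [List.take_length] using hhead
    · simpa using hset
  | succ r ih =>
    intro hr
    obtain ⟨ihh, ihs⟩ := ih (Nat.le_of_succ_le hr)
    have hrD : r < D := hr
    have hneg : ¬ ∃ m : ℕ, theta t (k + r) ++ [m.succPNat] ∈ t ∧
        theta t (k + r) ++ [m.succPNat] ∉ contourHist t (k + r) := by
      rintro ⟨m, hm1, hm2⟩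
      rw [ihh] at hm1
      refine hm2 ((ihs _).mpr ⟨by rwa [ihh], ?_⟩)
      rw [ihh]
      exact hcond r hrD m.succPNat hm1
    have hstep := s13_theta_succ_neg hneg
    have hhist := s13_hist_succ_neg hneg
    have hdl : (v.take (v.length - r)).dropLast = v.take (v.length - (r + 1)) := by
      rw [List.dropLast_eq_take, List.length_take, List.take_take]
      congr 1
      omega
    have hth : theta t (k + (r + 1)) = v.take (v.length - (r + 1)) := by
      have : k + (r + 1) = k + r + 1 := by omega
      rw [this, hstep, ihh, hdl]
    refine ⟨hth, ?_⟩
    intro w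
    have hmem : (theta t (k + r)).dropLast ∈ contourHist t (k + r) := by
      rw [ihh, hdl]
      refine (ihs _).mpr ⟨ht.2.1 v hv _ (List.take_prefix _ _), s13_prefix_le (List.take_prefix _ _)⟩
    have : k + (r + 1) = k + r + 1 := by omega
    rw [this, hhist, List.mem_cons]
    constructor
    · rintro (rfl | hw)
      · exact (ihs _).mp hmem
      · exact (ihs _).mp hw
    · intro hw
      exact Or.inr ((ihs _).mpr hw)

/-- Taking the next unvisited child. -/
private lemma s13_arrive {t : Finset Vertex} (ht : IsPlaneTreeSet t) {v p : Vertex} {c : ℕ+}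
    {k : ℕ} (hv' : p ++ [c] ∈ t)
    (hhead : theta t k = p)
    (hset : ∀ w, w ∈ contourHist t k ↔ w ∈ t ∧ w ≤ v)
    (hgt : v < p ++ [c])
    (hmin : ∀ w ∈ t, v < w → p ++ [c] ≤ w)
    (hsmall : ∀ m : ℕ+, m < c → p ++ [m] ∈ t → p ++ [m] ≤ v) :
    theta t (k + 1) = p ++ [c] ∧
      ∀ w, w ∈ contourHist t (k + 1) ↔ w ∈ t ∧ w ≤ p ++ [c] := by
  have hm₀c : ((c : ℕ) - 1).succPNat = c := by
    apply PNat.coe_injective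
    rw [Nat.succPNat_coe]
    have h1 : 1 ≤ (c : ℕ) := c.one_le
    omega
  have hnotv : p ++ [c] ∉ contourHist t k := by
    intro hmem
    exact absurd ((hset _).mp hmem).2 (not_le.mpr hgt)
  have hex : ∃ m : ℕ, theta t k ++ [m.succPNat] ∈ t ∧
      theta t k ++ [m.succPNat] ∉ contourHist t k :=
    ⟨(c : ℕ) - 1, by rw [hhead, hm₀c]; exact ⟨hv', hnotv⟩⟩
  have key : ∀ n : ℕ, (theta t k ++ [n.succPNat] ∈ t ∧
      theta t k ++ [n.succPNat] ∉ contourHist t k) → (c : ℕ) - 1 ≤ n := by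
    rintro n ⟨hn1, hn2⟩
    by_contra hlt
    push_neg at hlt
    have hlt' : n.succPNat < c := by
      rw [← PNat.coe_lt_coe, Nat.succPNat_coe]
      have := c.one_le
      omega
    rw [hhead] at hn1
    exact hn2 (by rw [hhead]; exact (hset _).mpr ⟨hn1, hsmall _ hlt' hn1⟩)
  have hinf : sInf {m : ℕ | theta t k ++ [m.succPNat] ∈ t ∧
      theta t k ++ [m.succPNat] ∉ contourHist t k} = (c : ℕ) - 1 := by
    refine le_antisymm (Nat.sInf_le ?_) (key _ (Nat.sInf_mem hex))
    show theta t k ++ _ ∈ t ∧ _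
    rw [hhead, hm₀c]
    exact ⟨hv', hnotv⟩
  have hth : theta t (k + 1) = p ++ [c] := by
    rw [s13_theta_succ_pos hex, hinf, hm₀c, hhead]
  refine ⟨hth, ?_⟩
  intro w
  rw [s13_hist_succ_pos hex, hinf, hm₀c, hhead, List.mem_cons]
  constructor
  · rintro (rfl | hw)
    · exact ⟨hv', le_rfl⟩
    · obtain ⟨h1, h2⟩ := (hset _).mp hw
      exact ⟨h1, le_trans h2 (le_of_lt hgt)⟩
  · rintro ⟨h1, h2⟩
    rcases eq_or_lt_of_le h2 with rfl | hlt
    · exact Or.inl rfl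
    · refine Or.inr ((hset _).mpr ⟨h1, ?_⟩)
      by_contra hle
      push_neg at hle
      exact absurd (hmin _ h1 hle) (not_le.mpr hlt)

end Statement13Contour
section Statement13Main

/-- The main invariant: at time `j_t(i)` the contour first visits `v_i`, and the visited set is
exactly the set of vertices lexicographically at most `v_i`. -/
private lemma s13_main_inv {t : Finset Vertex} (ht : IsPlaneTreeSet t) :
    ∀ i, i < t.card →
      theta t (jIdx t i) = lexVertex t i ∧
      ∀ w, w ∈ contourHist t (jIdx t i) ↔ w ∈ t ∧ w ≤ lexVertex t i := by
  intro i
  induction i with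
  | zero =>
    intro h0
    have hj : jIdx t 0 = 0 := by simp [jIdx, h0]
    rw [hj]
    have hz := s13_lexVertex_zero ht.1
    refine ⟨by rw [hz]; rfl, ?_⟩
    intro w
    show w ∈ [([] : Vertex)] ↔ _
    rw [hz]
    simp only [List.mem_singleton]
    constructor
    · rintro rfl; exact ⟨ht.1, le_rfl⟩
    · rintro ⟨-, h⟩; exact s13_le_nil h
  | succ i ih =>
    intro hi1
    have hi : i < t.card := lt_trans (Nat.lt_succ_self i) hi1
    obtain ⟨hth, hst⟩ := ih hi
    obtain ⟨p, c, hpv, hv'eq, hsmall, hcases⟩ := s13_succ_struct ht hi1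
    have hvv' : lexVertex t i < lexVertex t (i + 1) :=
      s13_lexVertex_strictMono (Nat.lt_succ_self i) hi1
    have hv't : lexVertex t (i + 1) ∈ t := s13_lexVertex_mem hi1
    have hplen : p.length ≤ (lexVertex t i).length := hpv.length_le
    have hDle : (lexVertex t i).length - p.length ≤ (lexVertex t i).length := Nat.sub_le _ _
    have hcond : ∀ r, r < (lexVertex t i).length - p.length → ∀ m : ℕ+,
        (lexVertex t i).take ((lexVertex t i).length - r) ++ [m] ∈ t →
        (lexVertex t i).take ((lexVertex t i).length - r) ++ [m] ≤ lexVertex t i := by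
      intro r hr m hm
      by_contra hnle
      have hlt : lexVertex t i < (lexVertex t i).take ((lexVertex t i).length - r) ++ [m] :=
        not_le.mp hnle
      have hge := s13_succ_min hi1 hm hlt
      obtain ⟨a, hpa, hca⟩ : ∃ a : ℕ+, p ++ [a] <+: lexVertex t i ∧ c = a + 1 := by
        rcases hcases with h1 | h2
        · exfalso
          rw [h1] at hr
          omega
        · exact h2
      have hpalen : p.length + 1 ≤ (lexVertex t i).length := by
        have := hpa.length_le
        simpa using this
      have hlenr : p.length + 1 ≤ (lexVertex t i).length - r := by omega
      have h1 : p ++ [a] <+: (lexVertex t i).take ((lexVertex t i).length - r) := by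
        refine List.prefix_of_prefix_length_le hpa (List.take_prefix _ _) ?_
        rw [List.length_take]
        simp only [List.length_append, List.length_singleton]
        omega
      obtain ⟨sfx, hs⟩ := h1
      have hx : (lexVertex t i).take ((lexVertex t i).length - r) ++ [m]
          = p ++ a :: (sfx ++ [m]) := by
        rw [← hs]; simp
      have hxlt : (lexVertex t i).take ((lexVertex t i).length - r) ++ [m]
          < lexVertex t (i + 1) := by
        rw [hx, hv'eq, hca]
        exact s13_append_cons_lt p _ [] (s13_pnat_lt_succ a)
      exact absurd hge (not_le.mpr hxlt)
    obtain ⟨hth2, hst2⟩ := s13_backtrack ht (s13_lexVertex_mem hi) hDle hth hst hcond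
      ((lexVertex t i).length - p.length) le_rfl
    have htake : (lexVertex t i).take
        ((lexVertex t i).length - ((lexVertex t i).length - p.length)) = p := by
      have h1 : (lexVertex t i).length - ((lexVertex t i).length - p.length) = p.length := by
        omega
      rw [h1]
      exact (List.prefix_iff_eq_take.mp hpv).symm
    rw [htake] at hth2
    have hgt' : lexVertex t i < p ++ [c] := by rw [← hv'eq]; exact hvv'
    have hmin' : ∀ w ∈ t, lexVertex t i < w → p ++ [c] ≤ w := by
      intro w hw h
      rw [← hv'eq]
      exact s13_succ_min hi1 hw h
    have harr := s13_arrive ht (by rw [← hv'eq]; exact hv't) hth2 hst2 hgt' hmin' hsmall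
    have hlen_i := s13_lexVertex_length_le ht i hi
    have hlv' : (lexVertex t (i + 1)).length = p.length + 1 := by rw [hv'eq]; simp
    have hjeq : jIdx t (i + 1) = jIdx t i + ((lexVertex t i).length - p.length) + 1 := by
      simp only [jIdx, if_pos hi, if_pos hi1]
      omega
    rw [← hjeq, ← hv'eq] at harr
    exact harr

private lemma s13_theta_final {t : Finset Vertex} (ht : IsPlaneTreeSet t) :
    theta t (2 * t.card - 2) = [] := by
  have hcard : 0 < t.card := Finset.card_pos.mpr ⟨[], ht.1⟩
  have hi : t.card - 1 < t.card := by omega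
  obtain ⟨hth, hst⟩ := s13_main_inv ht (t.card - 1) hi
  have hcond : ∀ r, r < (lexVertex t (t.card - 1)).length → ∀ m : ℕ+,
      (lexVertex t (t.card - 1)).take ((lexVertex t (t.card - 1)).length - r) ++ [m] ∈ t →
      (lexVertex t (t.card - 1)).take ((lexVertex t (t.card - 1)).length - r) ++ [m]
        ≤ lexVertex t (t.card - 1) :=
    fun r _ m hm => s13_le_last hm
  obtain ⟨hth2, -⟩ := s13_backtrack ht (s13_lexVertex_mem hi) le_rfl hth hst hcond
    (lexVertex t (t.card - 1)).length le_rfl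
  have hlen := s13_lexVertex_length_le ht _ hi
  have hj : jIdx t (t.card - 1) + (lexVertex t (t.card - 1)).length = 2 * t.card - 2 := by
    simp only [jIdx, if_pos hi]
    omega
  rw [hj] at hth2
  simpa using hth2

/-! #### Interpolation lemmas -/

private lemma s13_interp_eval {n k : ℕ} (f : ℕ → ℝ) {s : ℝ} (hk : k < n)
    (h1 : (k : ℝ) ≤ s * n) (h2 : s * n ≤ (k : ℝ) + 1) :
    interpFun n f s = f k + (f (k + 1) - f k) * (s * n - k) := by
  unfold interpFun
  have key : ∀ j ∈ Finset.range n,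
      (f (j + 1) - f j) * max 0 (min 1 (s * (n : ℝ) - j))
        = if j < k then f (j + 1) - f j
          else if j = k then (f (k + 1) - f k) * (s * n - k) else 0 := by
    intro j _
    rcases lt_trichotomy j k with h | rfl | h
    · rw [if_pos h]
      have hj1 : (j : ℝ) + 1 ≤ k := by exact_mod_cast h
      rw [min_eq_left (by linarith), max_eq_right zero_le_one, mul_one]
    · rw [if_neg (lt_irrefl j), if_pos rfl]
      rw [min_eq_right (by linarith), max_eq_right (by linarith)]
    · rw [if_neg (by omega), if_neg (by omega)]
      have hj1 : (k : ℝ) + 1 ≤ j := by exact_mod_cast h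
      rw [min_eq_right (by linarith), max_eq_left (by linarith), mul_zero]
  rw [Finset.sum_congr rfl key]
  rw [Finset.range_eq_Ico, ← Finset.sum_Ico_consecutive _ (Nat.zero_le (k + 1))
    (by omega : k + 1 ≤ n)]
  have hA : ∑ j ∈ Finset.Ico 0 (k + 1), (if j < k then f (j + 1) - f j
      else if j = k then (f (k + 1) - f k) * (s * n - k) else 0)
      = (f k - f 0) + (f (k + 1) - f k) * (s * n - k) := by
    rw [← Finset.range_eq_Ico, Finset.sum_range_succ,
      Finset.sum_congr rfl (fun j hj =>
        if_pos (Finset.mem_range.mp hj) :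
        ∀ j ∈ Finset.range k, (if j < k then f (j + 1) - f j
          else if j = k then (f (k + 1) - f k) * (s * n - k) else 0) = f (j + 1) - f j),
      Finset.sum_range_sub, if_neg (lt_irrefl k), if_pos rfl]
  have hB : ∑ j ∈ Finset.Ico (k + 1) n, (if j < k then f (j + 1) - f j
      else if j = k then (f (k + 1) - f k) * (s * n - k) else 0) = 0 := by
    refine Finset.sum_eq_zero ?_
    intro j hj
    obtain ⟨h1', -⟩ := Finset.mem_Ico.mp hj
    rw [if_neg (by omega), if_neg (by omega)]
  rw [hA, hB]
  ring

private lemma s13_interp_grid {n i : ℕ} (f : ℕ → ℝ) (hn : 0 < n) (hi : i ≤ n) :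
    interpFun n f ((i : ℝ) / n) = f i := by
  have hn' : ((n : ℕ) : ℝ) ≠ 0 := Nat.cast_ne_zero.mpr hn.ne'
  have hsn : (i : ℝ) / n * n = i := div_mul_cancel₀ _ hn'
  rcases lt_or_eq_of_le hi with h | rfl
  · rw [s13_interp_eval f h (by rw [hsn]) (by rw [hsn]; linarith)]
    rw [hsn]
    ring
  · have h1 : i - 1 < i := by omega
    have hc : ((i - 1 : ℕ) : ℝ) = (i : ℝ) - 1 := by
      rw [Nat.cast_sub hn]
      simp
    rw [s13_interp_eval f h1 (by rw [hsn, hc]; linarith) (by rw [hsn, hc]; linarith)]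
    have h2 : i - 1 + 1 = i := by omega
    rw [hsn, hc, h2]
    ring

private lemma s13_interp_bound {n k : ℕ} (f : ℕ → ℝ) {s c M : ℝ} (hk : k < n)
    (h1 : (k : ℝ) ≤ s * n) (h2 : s * n ≤ (k : ℝ) + 1)
    (hb1 : |f k - c| ≤ M) (hb2 : |f (k + 1) - c| ≤ M) :
    |interpFun n f s - c| ≤ M := by
  rw [s13_interp_eval f hk h1 h2]
  have hrw : f k + (f (k + 1) - f k) * (s * n - k) - c
      = (1 - (s * n - k)) * (f k - c) + (s * n - k) * (f (k + 1) - c) := by ring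
  rw [hrw]
  have h0 : 0 ≤ s * n - k := by linarith
  calc |(1 - (s * n - k)) * (f k - c) + (s * n - k) * (f (k + 1) - c)|
      ≤ |(1 - (s * n - k)) * (f k - c)| + |(s * n - k) * (f (k + 1) - c)| := abs_add_le _ _
    _ = (1 - (s * n - k)) * |f k - c| + (s * n - k) * |f (k + 1) - c| := by
        rw [abs_mul, abs_mul, abs_of_nonneg (by linarith), abs_of_nonneg h0]
    _ ≤ (1 - (s * n - k)) * M + (s * n - k) * M :=
        add_le_add (mul_le_mul_of_nonneg_left hb1 (by linarith))
          (mul_le_mul_of_nonneg_left hb2 h0)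
    _ = M := by ring

/-! #### Index and distance computations -/

private lemma s13_jIdx_lt {t : Finset Vertex} {i : ℕ} (hi : i < t.card) :
    jIdx t i = 2 * i - (lexVertex t i).length := by simp [jIdx, hi]

private lemma s13_jIdx_card {t : Finset Vertex} : jIdx t t.card = 2 * t.card - 2 := by
  simp [jIdx]

private lemma s13_jIdx_cast {t : Finset Vertex} (ht : IsPlaneTreeSet t) {i : ℕ}
    (hi : i < t.card) :
    (jIdx t i : ℝ) = 2 * i - ((lexVertex t i).length : ℝ) := by
  have h1 := s13_lexVertex_length_le ht i hi
  rw [s13_jIdx_lt hi, Nat.cast_sub (by omega)]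
  push_cast
  ring

private lemma s13_lcpLen_le_left : ∀ u w : Vertex, lcpLen u w ≤ u.length
  | [], _ => by simp [lcpLen]
  | _ :: _, [] => by simp [lcpLen]
  | a :: u, b :: w => by
    by_cases h : a = b
    · simp only [lcpLen, if_pos h, List.length_cons]
      exact Nat.add_le_add_right (s13_lcpLen_le_left u w) 1
    · simp [lcpLen, h]

private lemma s13_lcpLen_le_right : ∀ u w : Vertex, lcpLen u w ≤ w.length
  | [], _ => by simp [lcpLen]
  | _ :: _, [] => by simp [lcpLen]
  | a :: u, b :: w => by
    by_cases h : a = b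
    · simp only [lcpLen, if_pos h, List.length_cons]
      exact Nat.add_le_add_right (s13_lcpLen_le_right u w) 1
    · simp [lcpLen, h]

private lemma s13_lcpLen_nil (u : Vertex) : lcpLen u [] = 0 := by
  cases u <;> simp [lcpLen]

private lemma s13_treeDist_nil (u : Vertex) : treeDist u [] = u.length := by
  simp [treeDist, s13_lcpLen_nil]

private lemma s13_treeDist_cast (u w : Vertex) :
    (treeDist u w : ℝ) = u.length + w.length - 2 * lcpLen u w := by
  have h1 := s13_lcpLen_le_left u w
  have h2 := s13_lcpLen_le_right u w
  unfold treeDist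
  rw [Nat.cast_sub (by omega)]
  push_cast
  ring

end Statement13Main

end Statement13Aux

/-- equation (3.1) in the proof of Proposition 3.7. In a rooted plane tree
with vertices `v_0, …, v_{|t|-1}` in lexicographic order (and `v_{|t|} = v_0`),
`sup_{0 ≤ s ≤ 1} |C_t(s) - H_t(φ_t(s))| ≤ 2 + max_{0 ≤ i < |t|} dist_t(v_i, v_{i+1})`. -/
theorem statement13 {S : Type*} (T : MTree S) (hT : T.IsPlaneTree) :
    ∀ s ∈ Set.Icc (0:ℝ) 1,
      |contourFun T s - heightFun T (phi T.verts s)|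
        ≤ 2 + ((((Finset.range T.verts.card).sup fun i =>
            treeDist (lexVertex T.verts i) (lexVertex T.verts (i + 1))) : ℕ) : ℝ) := by
  intro s hs
  obtain ⟨hs0, hs1⟩ := hs
  set t := T.verts with htdef
  have ht : IsPlaneTreeSet t := hT
  have hcard : 0 < t.card := Finset.card_pos.mpr ⟨[], ht.1⟩
  have hcard1 : (1 : ℝ) ≤ (t.card : ℝ) := by exact_mod_cast hcard
  have hmcast : ((2 * t.card - 2 : ℕ) : ℝ) = 2 * (t.card : ℝ) - 2 := by
    rw [Nat.cast_sub (by omega)]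
    push_cast
    ring
  set A : Set ℕ := {i : ℕ | i ≤ t.card ∧ (jIdx t i : ℝ) ≤ s * (2 * t.card - 2)} with hA
  have hx0 : (0 : ℝ) ≤ s * (2 * (t.card : ℝ) - 2) := mul_nonneg hs0 (by linarith)
  have h0A : 0 ∈ A := by
    refine ⟨Nat.zero_le _, ?_⟩
    have hj0 : jIdx t 0 = 0 := by simp [jIdx, hcard]
    rw [hj0]
    simpa using hx0
  have hbddA : BddAbove A := ⟨t.card, fun i hi => hi.1⟩
  have hiA : sSup A ∈ A := Nat.sSup_mem ⟨0, h0A⟩ hbddA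
  set i₀ := sSup A with hi₀
  have hphi : phi t s = (i₀ : ℝ) / (t.card : ℝ) := by rw [hi₀, hA]; rfl
  have hH : heightFun T (phi t s) = ((lexVertex t i₀).length : ℝ) := by
    rw [hphi]
    exact s13_interp_grid _ hcard hiA.1
  have hsupnn : (0 : ℝ) ≤ (((Finset.range t.card).sup fun i =>
      treeDist (lexVertex t i) (lexVertex t (i + 1))) : ℕ) := Nat.cast_nonneg _
  rcases eq_or_lt_of_le hiA.1 with hcase | hcase
  · -- i₀ = t.card
    have hH0 : heightFun T (phi t s) = 0 := by
      rw [hH, hcase, s13_lexVertex_card]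
      simp
    have hC0 : contourFun T s = 0 := by
      rcases (show t.card = 1 ∨ 2 ≤ t.card by omega) with h1 | h2
      · show interpFun (2 * t.card - 2) (fun i => ((theta t i).length : ℝ)) s = 0
        rw [show 2 * t.card - 2 = 0 by omega]
        simp [interpFun, s13_theta_zero]
      · have h2' := hiA.2
        rw [hcase, s13_jIdx_card, hmcast] at h2'
        have hpos : (0 : ℝ) < 2 * (t.card : ℝ) - 2 := by
          have : (2 : ℝ) ≤ (t.card : ℝ) := by exact_mod_cast h2
          linarith
        have hs1' : s = 1 := by
          refine le_antisymm hs1 ?_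
          nlinarith
        show interpFun (2 * t.card - 2) (fun i => ((theta t i).length : ℝ)) s = 0
        rw [hs1']
        have hmpos : 0 < 2 * t.card - 2 := by omega
        have hone : (1 : ℝ) = ((2 * t.card - 2 : ℕ) : ℝ) / ((2 * t.card - 2 : ℕ) : ℝ) :=
          (div_self (Nat.cast_ne_zero.mpr hmpos.ne')).symm
        rw [hone, s13_interp_grid _ hmpos le_rfl, s13_theta_final ht]
        simp
    rw [hC0, hH0]
    simp only [sub_zero, abs_zero]
    linarith
  · -- i₀ < t.card
    have hn2 : 2 ≤ t.card := by
      by_contra hle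
      push_neg at hle
      have hc1 : t.card = 1 := by omega
      have h1A : 1 ∈ A := by
        refine ⟨by omega, ?_⟩
        have : jIdx t 1 = 0 := by
          simp [jIdx, hc1]
        rw [this]
        simpa using hx0
      have := le_csSup hbddA h1A
      omega
    have hnotA : i₀ + 1 ∉ A := fun h => by
      have := le_csSup hbddA h
      omega
    have hub : s * (2 * (t.card : ℝ) - 2) < (jIdx t (i₀ + 1) : ℝ) := by
      by_contra h
      push_neg at h
      exact hnotA ⟨by omega, h⟩
    have hxlb : (jIdx t i₀ : ℝ) ≤ s * (2 * (t.card : ℝ) - 2) := hiA.2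
    set x := s * (2 * (t.card : ℝ) - 2) with hxdef
    have hx0' : (0 : ℝ) ≤ x := hx0
    set k := ⌊x⌋₊ with hkdef
    have hk1 : jIdx t i₀ ≤ k := Nat.le_floor hxlb
    have hk2 : (k : ℝ) ≤ x := Nat.floor_le hx0'
    have hk3 : x ≤ (k : ℝ) + 1 := le_of_lt (Nat.lt_floor_add_one x)
    have hk4 : k + 1 ≤ jIdx t (i₀ + 1) := by
      have : k < jIdx t (i₀ + 1) := by
        rw [hkdef]
        exact (Nat.floor_lt hx0').mpr (by exact_mod_cast hub)
      omega
    have hjle : jIdx t (i₀ + 1) ≤ 2 * t.card - 2 := by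
      rcases lt_or_eq_of_le (show i₀ + 1 ≤ t.card by omega) with h | h
      · rw [s13_jIdx_lt h]
        omega
      · rw [h, s13_jIdx_card]
    have hkm : k < 2 * t.card - 2 := by omega
    obtain ⟨hanchor, -⟩ := s13_main_inv ht i₀ hcase
    have hlip : ∀ j : ℕ, jIdx t i₀ ≤ j →
        |((theta t j).length : ℝ) - ((lexVertex t i₀).length : ℝ)|
          ≤ (j : ℝ) - (jIdx t i₀ : ℝ) := by
      intro j hj
      have hth := s13_theta_lip t (jIdx t i₀) (j - jIdx t i₀)
      rw [Nat.add_sub_cancel' hj, hanchor] at hth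
      rw [Nat.cast_sub hj] at hth
      exact hth
    have hΔ1 : ∀ j : ℕ, jIdx t i₀ ≤ j → j ≤ jIdx t (i₀ + 1) →
        |((theta t j).length : ℝ) - ((lexVertex t i₀).length : ℝ)|
          ≤ (jIdx t (i₀ + 1) : ℝ) - (jIdx t i₀ : ℝ) := by
      intro j hj1 hj2
      refine le_trans (hlip j hj1) ?_
      have : (j : ℝ) ≤ (jIdx t (i₀ + 1) : ℝ) := by exact_mod_cast hj2
      linarith
    have hb1 : |((theta t k).length : ℝ) - ((lexVertex t i₀).length : ℝ)|
        ≤ (jIdx t (i₀ + 1) : ℝ) - (jIdx t i₀ : ℝ) := hΔ1 k hk1 (by omega)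
    have hb2 : |((theta t (k + 1)).length : ℝ) - ((lexVertex t i₀).length : ℝ)|
        ≤ (jIdx t (i₀ + 1) : ℝ) - (jIdx t i₀ : ℝ) := hΔ1 (k + 1) (by omega) hk4
    have hCbound : |contourFun T s - ((lexVertex t i₀).length : ℝ)|
        ≤ (jIdx t (i₀ + 1) : ℝ) - (jIdx t i₀ : ℝ) := by
      show |interpFun (2 * t.card - 2) (fun i => ((theta t i).length : ℝ)) s - _| ≤ _
      refine s13_interp_bound _ hkm ?_ ?_ hb1 hb2
      · rw [hmcast, ← hxdef]
        exact hk2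
      · rw [hmcast, ← hxdef]
        exact hk3
    have hdist : (jIdx t (i₀ + 1) : ℝ) - (jIdx t i₀ : ℝ)
        ≤ 2 + (treeDist (lexVertex t i₀) (lexVertex t (i₀ + 1)) : ℝ) := by
      rcases lt_or_eq_of_le (show i₀ + 1 ≤ t.card by omega) with h | h
      · rw [s13_jIdx_cast ht h, s13_jIdx_cast ht hcase, s13_treeDist_cast]
        have hlcp : (lcpLen (lexVertex t i₀) (lexVertex t (i₀ + 1)) : ℝ)
            ≤ ((lexVertex t (i₀ + 1)).length : ℝ) := by
          exact_mod_cast s13_lcpLen_le_right _ _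
        push_cast
        linarith
      · rw [h, s13_jIdx_card, s13_lexVertex_card, s13_treeDist_nil,
          s13_jIdx_cast ht hcase, hmcast]
        have hi₀c : (i₀ : ℝ) = (t.card : ℝ) - 1 := by
          have : i₀ = t.card - 1 := by omega
          rw [this, Nat.cast_sub (by omega)]
          simp
        rw [hi₀c]
        linarith
    have hsup : (treeDist (lexVertex t i₀) (lexVertex t (i₀ + 1)) : ℝ)
        ≤ (((Finset.range t.card).sup fun i =>
            treeDist (lexVertex t i) (lexVertex t (i + 1))) : ℕ) := by
      have hmem := Finset.le_sup (f := fun i => treeDist (lexVertex t i) (lexVertex t (i + 1)))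
        (Finset.mem_range.mpr hcase)
      exact_mod_cast hmem
    calc |contourFun T s - heightFun T (phi t s)|
        = |contourFun T s - ((lexVertex t i₀).length : ℝ)| := by rw [hH]
      _ ≤ (jIdx t (i₀ + 1) : ℝ) - (jIdx t i₀ : ℝ) := hCbound
      _ ≤ 2 + (treeDist (lexVertex t i₀) (lexVertex t (i₀ + 1)) : ℝ) := hdist
      _ ≤ 2 + (((Finset.range t.card).sup fun i =>
            treeDist (lexVertex t i) (lexVertex t (i + 1))) : ℕ) := by linarith

end TreeSym
end
end

section
/- Let t be a rooted plane tree. Then (2|t|−2) · sup over 0 ≤ s ≤ 1 of |φ_t(s) − s| ≤ 4 + height(t), where height(t) is the maximal distance from the root to a vertex of t. -/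
open MeasureTheory Filter Topology
open scoped ENNReal NNReal Classical

noncomputable section

namespace TreeSym

/-- equation (3.3) in the proof of Proposition 3.7. For a rooted plane tree
`t`, `(2|t|-2) · sup_{0 ≤ s ≤ 1} |φ_t(s) - s| ≤ 4 + height(t)`. -/
theorem statement14 (t : Finset Vertex) (ht : IsPlaneTreeSet t) :
    ∀ s ∈ Set.Icc (0:ℝ) 1,
      (2 * (t.card : ℝ) - 2) * |phi t s - s| ≤ 4 + ((t.sup fun v => v.length : ℕ) : ℝ) := by
  intro s hs
  obtain ⟨hs0, hs1⟩ := hs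
  have hroot : ([] : Vertex) ∈ t := ht.1
  have hn1 : 1 ≤ t.card := Finset.card_pos.2 ⟨[], hroot⟩
  have hH0 : (0:ℝ) ≤ ((t.sup fun v => v.length : ℕ) : ℝ) := Nat.cast_nonneg _
  rcases eq_or_lt_of_le hn1 with h1 | hn2
  · have h0 : (2 * (t.card : ℝ) - 2) = 0 := by rw [← h1]; norm_num
    rw [h0, zero_mul]; linarith
  have hnR : (0:ℝ) < t.card := by exact_mod_cast Nat.lt_of_lt_of_le Nat.zero_lt_one hn1
  have hc2 : (2:ℝ) ≤ t.card := by exact_mod_cast hn2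
  have hfac : (0:ℝ) ≤ 2 * (t.card:ℝ) - 2 := by linarith
  set S := {i : ℕ | i ≤ t.card ∧ (jIdx t i : ℝ) ≤ s * (2 * t.card - 2)} with hSdef
  have h0S : 0 ∈ S := by
    refine ⟨Nat.zero_le _, ?_⟩
    have hj0 : jIdx t 0 = 0 := by
      unfold jIdx
      rw [if_pos (Nat.lt_of_lt_of_le Nat.zero_lt_one hn1)]
      omega
    rw [hj0]
    push_cast
    exact mul_nonneg hs0 hfac
  have hbdd : BddAbove S := ⟨t.card, fun i hi => hi.1⟩
  have hmem : sSup S ∈ S := Nat.sSup_mem ⟨0, h0S⟩ hbdd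
  set I := sSup S with hIdef
  have hIle : I ≤ t.card := hmem.1
  have hIleR : (I:ℝ) ≤ t.card := Nat.cast_le.2 hIle
  have hIj : (jIdx t I : ℝ) ≤ s * (2 * t.card - 2) := hmem.2
  have hphi : phi t s = (I : ℝ) / t.card := rfl
  have key : 2*(I:ℝ) - 2 ≤ (2 * (t.card:ℝ) - 2) * ((I:ℝ)/t.card) := by
    rw [mul_div_assoc', le_div_iff₀ hnR]
    nlinarith [hIleR]
  have key2 : (2 * (t.card:ℝ) - 2) * ((I:ℝ)/t.card) ≤ 2*(I:ℝ) := by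
    rw [mul_div_assoc', div_le_iff₀ hnR]
    have hI0 : (0:ℝ) ≤ (I:ℝ) := Nat.cast_nonneg _
    nlinarith
  have partA : (2 * (t.card:ℝ) - 2) * (phi t s - s)
      ≤ 4 + ((t.sup fun v => v.length : ℕ) : ℝ) := by
    rcases lt_or_eq_of_le hIle with hIlt | hIeq
    · have hjI : 2 * I ≤ jIdx t I + (lexVertex t I).length := by
        unfold jIdx; rw [if_pos hIlt]; omega
      have hlen : (lexVertex t I).length ≤ t.sup fun v => v.length := by
        have hmem' : lexVertex t I ∈ t := by
          unfold lexVertex lexEnum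
          have hlt : I < (t.sort (· ≤ ·)).length := by
            rw [Finset.length_sort]; exact hIlt
          rw [List.getD_eq_getElem _ _ hlt]
          exact (Finset.mem_sort _).1 (List.getElem_mem _)
        exact Finset.le_sup hmem'
      have hlenR : ((lexVertex t I).length : ℝ) ≤ ((t.sup fun v => v.length : ℕ) : ℝ) := by
        exact_mod_cast hlen
      have hc1 : 2*(I:ℝ) ≤ (jIdx t I : ℝ) + ((lexVertex t I).length : ℝ) := by
        exact_mod_cast hjI
      rw [hphi]
      nlinarith [key2, hIj, hc1, hlenR, hH0]
    · have hjn : jIdx t t.card = 2 * t.card - 2 := by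
        unfold jIdx; rw [if_neg (lt_irrefl _)]
      have hjnR : (jIdx t t.card : ℝ) = 2 * (t.card:ℝ) - 2 := by
        rw [hjn]; push_cast [Nat.cast_sub (by omega : 2 ≤ 2 * t.card)]; ring
      have hs1' : 2 * (t.card:ℝ) - 2 ≤ s * (2 * t.card - 2) := by
        have h := hIj
        rw [hIeq, hjnR] at h
        exact h
      have hphi1 : phi t s = 1 := by
        rw [hphi, hIeq, div_self (ne_of_gt hnR)]
      rw [hphi1]
      nlinarith
  have partB : -(4 + ((t.sup fun v => v.length : ℕ) : ℝ))
      ≤ (2 * (t.card:ℝ) - 2) * (phi t s - s) := by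
    rcases lt_or_eq_of_le hIle with hIlt | hIeq
    · have hnot : I + 1 ∉ S := fun h =>
        (Nat.lt_irrefl I) (lt_of_lt_of_le (Nat.lt_succ_self I) (le_csSup hbdd h))
      have hjlt : s * (2 * (t.card:ℝ) - 2) < (jIdx t (I+1) : ℝ) := by
        by_contra hcon
        push_neg at hcon
        exact hnot ⟨by omega, hcon⟩
      have hjub : jIdx t (I+1) ≤ 2 * (I+1) := by
        unfold jIdx; split <;> omega
      have hjubR : (jIdx t (I+1) : ℝ) ≤ 2*(I:ℝ) + 2 := by
        have := (Nat.cast_le (α := ℝ)).2 hjub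
        push_cast at this
        linarith
      rw [hphi]
      nlinarith [key, hjlt, hjubR, hH0]
    · have hphi1 : phi t s = 1 := by
        rw [hphi, hIeq, div_self (ne_of_gt hnR)]
      rw [hphi1]
      nlinarith
  have habs : |(2 * (t.card:ℝ) - 2) * (phi t s - s)|
      ≤ 4 + ((t.sup fun v => v.length : ℕ) : ℝ) := abs_le.mpr ⟨partB, partA⟩
  rwa [abs_mul, abs_of_nonneg hfac] at habs

end TreeSym
end
end
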